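/- arXiv:1602.05823 — 2 statements merged into one kernel-verified Lean document; each statement's English description precedes it below -/
import Mathlib

section
/- For s ≥ 2 with s ≤ 2^{d+1}, K_T(s) satisfies s^{log3/log2}/3 ≤ K_T(s) ≤ s^{log3/log2}, where K_T(s) is the supremum of Σ_{ν∈Λ} 2^{‖ν‖₀} over lower sets Λ ⊂ ℕ₀^d with #Λ = s. -/
open Finset

noncomputable def al : ℝ := Real.logb 2 3

lemma two_rpow_al : (2:ℝ) ^ al = 3 := Real.rpow_logb (by norm_num) (by norm_num) (by norm_num)

lemma one_lt_al : 1 < al := by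
  rw [al, Real.lt_logb_iff_rpow_lt (by norm_num) (by norm_num), Real.rpow_one]; norm_num

lemma al_lt_two : al < 2 := by
  rw [al, Real.logb_lt_iff_lt_rpow (by norm_num) (by norm_num)]
  rw [show ((2:ℝ):ℝ) = ((2:ℕ):ℝ) by norm_num, Real.rpow_natCast]; norm_num

lemma al_pos : 0 < al := lt_trans one_pos one_lt_al

lemma keyt : ∀ t ∈ Set.Icc (0:ℝ) 1, 1 + 2 * t ^ al ≤ (1 + t) ^ al := by
  have hβ : 0 < al - 1 := by linarith [one_lt_al]
  set β : ℝ := al - 1 with hβdef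
  set r : ℝ := 2 ^ β⁻¹ with hrdef
  have hrβ : r ^ β = 2 := by
    rw [hrdef, ← Real.rpow_mul (by norm_num), inv_mul_cancel₀ hβ.ne', Real.rpow_one]
  have hr2 : 2 < r := by
    have : (2:ℝ) ^ (1:ℝ) < 2 ^ β⁻¹ := by
      apply Real.rpow_lt_rpow_left_iff (by norm_num) |>.2
      rw [lt_inv_comm₀ one_pos hβ, inv_one]
      linarith [al_lt_two]
    simpa [Real.rpow_one] using this
  set c : ℝ := (r - 1)⁻¹ with hcdef
  have hc0 : 0 < c := by rw [hcdef]; exact inv_pos.2 (by linarith)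
  have hc1 : c < 1 := by rw [hcdef, inv_lt_one_iff₀]; right; linarith
  set h : ℝ → ℝ := fun t => (1 + t) ^ al - 2 * t ^ al - 1 with hdef
  set H : ℝ → ℝ := fun t => al * (1 + t) ^ β - 2 * (al * t ^ β) with hHdef
  have hderiv : ∀ t : ℝ, HasDerivAt h (H t) t := by
    intro t
    have h1 : HasDerivAt (fun t : ℝ => (1 + t) ^ al) (al * (1 + t) ^ (al - 1)) t := by
      simpa using ((hasDerivAt_id t).const_add 1).rpow_const (Or.inr one_lt_al.le)
    have h2 : HasDerivAt (fun t : ℝ => t ^ al) (al * t ^ (al - 1)) t := by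
      simpa using (hasDerivAt_id t).rpow_const (Or.inr one_lt_al.le)
    have := (h1.sub ((h2.const_mul 2))).sub_const 1
    exact this
  have hdiff : ∀ t : ℝ, DifferentiableAt ℝ h t := fun t => (hderiv t).differentiableAt
  have hderiv' : deriv h = H := funext fun t => (hderiv t).deriv
  have hmono : MonotoneOn h (Set.Icc 0 c) := by
    apply monotoneOn_of_deriv_nonneg (convex_Icc 0 c)
      (fun t _ => (hdiff t).continuousAt.continuousWithinAt)
      (fun t _ => (hdiff t).differentiableWithinAt)
    intro t ht
    rw [interior_Icc] at ht
    rw [hderiv', hHdef]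
    show 0 ≤ al * (1 + t) ^ β - 2 * (al * t ^ β)
    have ht0 : 0 < t := ht.1
    have hrt : r * t ≤ 1 + t := by
      have h' : t ≤ (r - 1)⁻¹ := ht.2.le
      have h2 : t * (r - 1) ≤ (r - 1)⁻¹ * (r - 1) := mul_le_mul_of_nonneg_right h' (by linarith)
      have h3 : (r - 1)⁻¹ * (r - 1) = 1 := inv_mul_cancel₀ (ne_of_gt (show (0:ℝ) < r - 1 by linarith))
      nlinarith
    have : 2 * t ^ β ≤ (1 + t) ^ β := by
      calc 2 * t ^ β = r ^ β * t ^ β := by rw [hrβ]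
        _ = (r * t) ^ β := (Real.mul_rpow (by linarith) ht0.le).symm
        _ ≤ (1 + t) ^ β := Real.rpow_le_rpow (by positivity) hrt hβ.le
    nlinarith [al_pos]
  have hanti : AntitoneOn h (Set.Icc c 1) := by
    apply antitoneOn_of_deriv_nonpos (convex_Icc c 1)
      (fun t _ => (hdiff t).continuousAt.continuousWithinAt)
      (fun t _ => (hdiff t).differentiableWithinAt)
    intro t ht
    rw [interior_Icc] at ht
    rw [hderiv', hHdef]
    show al * (1 + t) ^ β - 2 * (al * t ^ β) ≤ 0
    have ht0 : 0 < t := lt_trans hc0 ht.1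
    have hrt : 1 + t ≤ r * t := by
      have h' : (r - 1)⁻¹ ≤ t := ht.1.le
      have h2 : (r - 1)⁻¹ * (r - 1) ≤ t * (r - 1) := mul_le_mul_of_nonneg_right h' (by linarith)
      have h3 : (r - 1)⁻¹ * (r - 1) = 1 := inv_mul_cancel₀ (ne_of_gt (show (0:ℝ) < r - 1 by linarith))
      nlinarith
    have : (1 + t) ^ β ≤ 2 * t ^ β := by
      calc (1 + t) ^ β ≤ (r * t) ^ β := Real.rpow_le_rpow (by linarith) hrt hβ.le
        _ = r ^ β * t ^ β := Real.mul_rpow (by linarith) ht0.le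
        _ = 2 * t ^ β := by rw [hrβ]
    nlinarith [al_pos]
  have h0 : h 0 = 0 := by
    simp [hdef, Real.zero_rpow al_pos.ne', Real.one_rpow]
  have h1 : h 1 = 0 := by
    have : ((1:ℝ) + 1) ^ al = 3 := by norm_num [two_rpow_al]
    simp [hdef, this, Real.one_rpow]
    norm_num
  intro t ht
  have : 0 ≤ h t := by
    rcases le_total t c with hle | hge
    · have := hmono (Set.mem_Icc.2 ⟨le_refl 0, hc0.le⟩) (Set.mem_Icc.2 ⟨ht.1, hle⟩) ht.1
      rwa [h0] at this
    · have := hanti (Set.mem_Icc.2 ⟨hge, ht.2⟩) (Set.mem_Icc.2 ⟨hc1.le, le_refl 1⟩) ht.2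
      rwa [h1] at this
  rw [hdef] at this
  simp only at this
  linarith

lemma keyab {a b : ℝ} (hb : 0 ≤ b) (hba : b ≤ a) : a ^ al + 2 * b ^ al ≤ (a + b) ^ al := by
  rcases eq_or_lt_of_le (hb.trans hba) with h0 | h0
  · have hb0 : b = 0 := le_antisymm (by rw [h0]; exact hba) hb
    simp [← h0, hb0, Real.zero_rpow al_pos.ne']
  · have ha : 0 < a := h0
    have ht : b / a ∈ Set.Icc (0:ℝ) 1 := ⟨by positivity, (div_le_one ha).2 hba⟩
    have := keyt _ ht
    have hmul := mul_le_mul_of_nonneg_left this (le_of_lt (Real.rpow_pos_of_pos ha al))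
    have hba' : a ^ al * (b / a) ^ al = b ^ al := by
      rw [← Real.mul_rpow ha.le (by positivity)]
      congr 1; field_simp
    calc a ^ al + 2 * b ^ al = a ^ al * (1 + 2 * (b/a) ^ al) := by
          rw [mul_add, mul_one, mul_comm (2:ℝ) ((b/a)^al), ← mul_assoc, hba']; ring
      _ ≤ a ^ al * (1 + b/a) ^ al := hmul
      _ = (a + b) ^ al := by
          rw [← Real.mul_rpow ha.le (by positivity)]
          congr 1; field_simp


def sig {d : ℕ} (A : Finset (Fin d → ℕ)) : ℕ :=
  ∑ μ ∈ A, 2 ^ (Finset.univ.filter (fun k => μ k ≠ 0)).card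

lemma wt_succ {d : ℕ} (ν : Fin (d+1) → ℕ) :
    2 ^ (Finset.univ.filter (fun k => ν k ≠ 0)).card =
      (if ν 0 = 0 then 1 else 2) *
        2 ^ (Finset.univ.filter (fun k => Fin.tail ν k ≠ 0)).card := by
  rw [Finset.card_filter, Finset.card_filter, Fin.sum_univ_succ, pow_add]
  congr 1
  by_cases h : ν 0 = 0 <;> simp [h]

lemma fold (n : ℕ → ℝ) (h0 : ∀ j, 0 ≤ n j) (hle : ∀ j, n j ≤ n 0) (m : ℕ) :
    n 0 ^ al + 2 * ∑ j ∈ Finset.Icc 1 m, n j ^ al ≤ (∑ j ∈ Finset.range (m+1), n j) ^ al := by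
  induction m with
  | zero => simp
  | succ m ih =>
    rw [Finset.sum_Icc_succ_top (by omega), Finset.sum_range_succ]
    have hA : n 0 ≤ ∑ j ∈ Finset.range (m+1), n j :=
      Finset.single_le_sum (fun j _ => h0 j) (Finset.mem_range.2 (by omega))
    have hb : n (m+1) ≤ ∑ j ∈ Finset.range (m+1), n j := (hle (m+1)).trans hA
    have := keyab (h0 (m+1)) hb
    calc n 0 ^ al + 2 * (∑ j ∈ Finset.Icc 1 m, n j ^ al + n (m+1) ^ al)
        = (n 0 ^ al + 2 * ∑ j ∈ Finset.Icc 1 m, n j ^ al) + 2 * n (m+1) ^ al := by ring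
      _ ≤ (∑ j ∈ Finset.range (m+1), n j) ^ al + 2 * n (m+1) ^ al := by linarith
      _ ≤ (∑ j ∈ Finset.range (m+1), n j + n (m+1)) ^ al := this

lemma range_split (J : ℕ) : Finset.range (J+1) = insert 0 (Finset.Icc 1 J) := by
  ext x; simp [Nat.lt_succ_iff]; omega

lemma main_upper : ∀ (d : ℕ) (Λ : Finset (Fin d → ℕ)),
    (∀ ν ∈ Λ, ∀ μ : Fin d → ℕ, (∀ k, μ k ≤ ν k) → μ ∈ Λ) →
    ((sig Λ : ℕ) : ℝ) ≤ (Λ.card : ℝ) ^ al := by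
  intro d
  induction d with
  | zero =>
    intro Λ _
    rcases Λ.eq_empty_or_nonempty with rfl | ⟨f, hf⟩
    · simp [sig, Real.zero_rpow al_pos.ne']
    · have hone : Λ = {f} :=
        Finset.eq_singleton_iff_unique_mem.2 ⟨hf, fun g _ => funext fun k => k.elim0⟩
      rw [hone]
      simp [sig, Real.one_rpow]
  | succ d ih =>
    intro Λ hlow
    obtain ⟨J, hJ⟩ : ∃ n, n = Λ.sup (fun ν => ν 0) := ⟨_, rfl⟩
    set S : ℕ → Finset (Fin (d+1) → ℕ) := fun j => Λ.filter (fun ν => ν 0 = j) with hS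
    set T : ℕ → Finset (Fin d → ℕ) := fun j => (S j).image Fin.tail with hT
    have hmaps : ∀ ν ∈ Λ, ν 0 ∈ Finset.range (J+1) := fun ν hν =>
      Finset.mem_range.2 (Nat.lt_succ_of_le (hJ ▸ Finset.le_sup (f := fun ν => ν 0) hν))
    have hinj : ∀ j, ∀ ν₁ ∈ S j, ∀ ν₂ ∈ S j, Fin.tail ν₁ = Fin.tail ν₂ → ν₁ = ν₂ := by
      intro j ν₁ h₁ ν₂ h₂ ht
      have e1 : ν₁ 0 = j := (Finset.mem_filter.1 h₁).2
      have e2 : ν₂ 0 = j := (Finset.mem_filter.1 h₂).2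
      funext k
      refine Fin.cases ?_ ?_ k
      · rw [e1, e2]
      · intro i; exact congrFun ht i
    have hcardT : ∀ j, (T j).card = (S j).card := fun j =>
      Finset.card_image_of_injOn (fun ν₁ h₁ ν₂ h₂ => hinj j ν₁ h₁ ν₂ h₂)
    have hTlow : ∀ j, ∀ μ ∈ T j, ∀ μ' : Fin d → ℕ, (∀ k, μ' k ≤ μ k) → μ' ∈ T j := by
      intro j μ hμ μ' hle
      obtain ⟨ν, hν, hτ⟩ := Finset.mem_image.1 hμ
      have hνΛ : ν ∈ Λ := (Finset.mem_filter.1 hν).1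
      have hν0 : ν 0 = j := (Finset.mem_filter.1 hν).2
      have hc : Fin.cons j μ' ∈ Λ := by
        apply hlow ν hνΛ
        intro k
        refine Fin.cases ?_ ?_ k
        · simp [hν0]
        · intro i
          rw [Fin.cons_succ]
          calc μ' i ≤ μ i := hle i
            _ = ν i.succ := by rw [← hτ]; rfl
      exact Finset.mem_image.2 ⟨Fin.cons j μ',
        Finset.mem_filter.2 ⟨hc, Fin.cons_zero _ _⟩, Fin.tail_cons _ _⟩
    have hT0 : ∀ j, T j ⊆ T 0 := by
      intro j μ hμ
      obtain ⟨ν, hν, hτ⟩ := Finset.mem_image.1 hμ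
      have hνΛ : ν ∈ Λ := (Finset.mem_filter.1 hν).1
      have hc : Fin.cons 0 μ ∈ Λ := by
        apply hlow ν hνΛ
        intro k
        refine Fin.cases ?_ ?_ k
        · simp
        · intro i
          rw [Fin.cons_succ]
          calc μ i = ν i.succ := by rw [← hτ]; rfl
            _ ≤ ν i.succ := le_refl _
      exact Finset.mem_image.2 ⟨Fin.cons 0 μ,
        Finset.mem_filter.2 ⟨hc, Fin.cons_zero _ _⟩, Fin.tail_cons _ _⟩
    have hsum : sig Λ = ∑ j ∈ Finset.range (J+1), sig (S j) :=
      (Finset.sum_fiberwise_of_maps_to hmaps _).symm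
    have hwt : ∀ j, sig (S j) = (if j = 0 then 1 else 2) * sig (T j) := by
      intro j
      rw [sig, sig, hT]
      rw [Finset.sum_image (hinj j), Finset.mul_sum]
      apply Finset.sum_congr rfl
      intro ν hν
      have hν0 : ν 0 = j := (Finset.mem_filter.1 hν).2
      rw [wt_succ ν, hν0]
    have hcard : Λ.card = ∑ j ∈ Finset.range (J+1), (T j).card := by
      rw [Finset.card_eq_sum_card_fiberwise hmaps]
      exact Finset.sum_congr rfl fun j _ => (hcardT j).symm
    have hsplit : Finset.range (J+1) = insert 0 (Finset.Icc 1 J) := range_split J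
    have h0notin : (0:ℕ) ∉ Finset.Icc 1 J := by simp
    have htwo : ∀ j ∈ Finset.Icc 1 J, sig (S j) = 2 * sig (T j) := by
      intro j hj
      rw [hwt j, if_neg (Nat.one_le_iff_ne_zero.1 (Finset.mem_Icc.1 hj).1)]
    have hstep1 : sig Λ = sig (T 0) + 2 * ∑ j ∈ Finset.Icc 1 J, sig (T j) := by
      rw [hsum, hsplit, Finset.sum_insert h0notin, hwt 0, if_pos rfl, one_mul,
        Finset.sum_congr rfl htwo, ← Finset.mul_sum]
    have hIH : ∀ j, ((sig (T j) : ℕ) : ℝ) ≤ ((T j).card : ℝ) ^ al := fun j => ih (T j) (hTlow j)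
    have hn0 : ∀ j, (0:ℝ) ≤ ((T j).card : ℝ) := fun j => Nat.cast_nonneg _
    have hnle : ∀ j, ((T j).card : ℝ) ≤ ((T 0).card : ℝ) := fun j =>
      Nat.cast_le.2 (Finset.card_le_card (hT0 j))
    have key := fold (fun j => ((T j).card : ℝ)) hn0 hnle J
    rw [hstep1]
    push_cast
    calc ((sig (T 0) : ℕ) : ℝ) + 2 * ∑ j ∈ Finset.Icc 1 J, ((sig (T j) : ℕ) : ℝ)
        ≤ ((T 0).card : ℝ) ^ al + 2 * ∑ j ∈ Finset.Icc 1 J, ((T j).card : ℝ) ^ al := by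
          have hsle : ∑ j ∈ Finset.Icc 1 J, ((sig (T j) : ℕ) : ℝ)
              ≤ ∑ j ∈ Finset.Icc 1 J, ((T j).card : ℝ) ^ al :=
            Finset.sum_le_sum fun j _ => hIH j
          linarith [hIH 0]
      _ ≤ (∑ j ∈ Finset.range (J+1), ((T j).card : ℝ)) ^ al := key
      _ = (Λ.card : ℝ) ^ al := by rw [hcard]; push_cast; ring_nf

/-- `K_T(s)`: the supremum of `∑_{ν ∈ Λ} 2 ^ ‖ν‖₀` over lower sets
`Λ ⊂ ℕ₀^d` of cardinality `s`. -/
noncomputable def KT (d s : ℕ) : ℕ :=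
  sSup {t : ℕ | ∃ Λ : Finset (Fin d → ℕ),
    (∀ ν ∈ Λ, ∀ μ : Fin d → ℕ, (∀ k, μ k ≤ ν k) → μ ∈ Λ) ∧ Λ.card = s ∧
    t = ∑ ν ∈ Λ, 2 ^ (Finset.univ.filter (fun k => ν k ≠ 0)).card}

theorem KT_sharp_bounds (d s : ℕ) (hd : 1 ≤ d) (hs2 : 2 ≤ s) (hs : s ≤ 2 ^ (d + 1)) :
    (s : ℝ) ^ (Real.log 3 / Real.log 2) / 3 ≤ (KT d s : ℝ) ∧
      (KT d s : ℝ) ≤ (s : ℝ) ^ (Real.log 3 / Real.log 2) := by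
  have hal : Real.log 3 / Real.log 2 = al := rfl
  rw [hal]
  -- the dyadic scale
  set d' := Nat.log 2 (s - 1) with hd'
  have h1 : 2 ^ d' ≤ s - 1 := Nat.pow_log_le_self 2 (by omega)
  have h2 : s - 1 < 2 ^ (d' + 1) := Nat.lt_pow_succ_log_self (by norm_num) _
  have hlt : 2 ^ d' < s := by omega
  have hsle : s ≤ 2 ^ (d' + 1) := by omega
  have hd'd : d' ≤ d := by
    have : 2 ^ d' < 2 ^ (d + 1) := lt_of_lt_of_le hlt hs
    have := (Nat.pow_lt_pow_iff_right (by norm_num : 1 < 2)).1 this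
    omega
  -- the construction
  set z : Fin d := ⟨0, hd⟩ with hz
  set ν : Fin d → ℕ := fun k => if (k : ℕ) < d' then 1 else 0 with hν
  set R : Finset (Fin d → ℕ) := Finset.Iic ν with hR
  set M : ℕ := ν z + (s - 2 ^ d') with hM
  set I : Finset ℕ := Finset.Icc (ν z + 1) M with hI
  set e : ℕ → (Fin d → ℕ) := fun m k => if k = z then m else 0 with he
  set Λ : Finset (Fin d → ℕ) := R ∪ I.image e with hΛ
  -- cardinalities
  have hprodaux : ∀ a : ℕ, (∏ j ∈ Finset.range d, (if j < d' then a else 1)) = a ^ d' := by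
    intro a
    rw [← Finset.prod_range_mul_prod_Ico _ hd'd]
    rw [Finset.prod_congr rfl (fun j hj => if_pos (Finset.mem_range.1 hj)),
      Finset.prod_congr rfl (fun j hj => if_neg (by
        have := (Finset.mem_Ico.1 hj).1; omega)), Finset.prod_const, Finset.prod_const,
      one_pow, mul_one, Finset.card_range]
  have hcardR : R.card = 2 ^ d' := by
    rw [hR, Pi.card_Iic]
    have : ∀ i : Fin d, (Finset.Iic (ν i)).card = (if (i:ℕ) < d' then 2 else 1) := by
      intro i
      rw [Nat.card_Iic, hν]
      by_cases h : (i:ℕ) < d' <;> simp [h]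
    rw [Finset.prod_congr rfl (fun i _ => this i)]
    rw [Fin.prod_univ_eq_prod_range (fun j => if j < d' then 2 else 1) d]
    exact hprodaux 2
  have hwt' : ∀ μ : Fin d → ℕ, (2:ℕ) ^ (Finset.univ.filter (fun k => μ k ≠ 0)).card
      = ∏ i : Fin d, (if μ i ≠ 0 then 2 else 1) := by
    intro μ
    rw [Finset.card_filter, ← Finset.prod_pow_eq_pow_sum]
    apply Finset.prod_congr rfl
    intro i _
    by_cases h : μ i ≠ 0 <;> simp [h]
  have hsigR : sig R = 3 ^ d' := by
    rw [sig, Finset.sum_congr rfl (fun μ _ => hwt' μ), hR]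
    rw [show Finset.Iic ν = Fintype.piFinset fun i => Finset.Iic (ν i) from rfl]
    rw [show (∑ μ ∈ Fintype.piFinset fun i => Finset.Iic (ν i),
        ∏ i : Fin d, (if μ i ≠ 0 then 2 else 1)) =
        ∏ i : Fin d, ∑ j ∈ Finset.Iic (ν i), (if j ≠ 0 then 2 else 1) from
      (Finset.prod_univ_sum (fun i => Finset.Iic (ν i)) (fun _ j => if j ≠ 0 then 2 else 1)).symm]
    have : ∀ i : Fin d, (∑ j ∈ Finset.Iic (ν i), (if j ≠ 0 then 2 else 1))
        = (if (i:ℕ) < d' then 3 else 1) := by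
      intro i
      rw [hν]
      by_cases h : (i:ℕ) < d' <;> simp [h] <;> decide
    rw [Finset.prod_congr rfl (fun i _ => this i)]
    rw [Fin.prod_univ_eq_prod_range (fun j => if j < d' then 3 else 1) d]
    exact hprodaux 3
  -- e injective, disjointness
  have hez : ∀ m, e m z = m := fun m => by rw [he]; simp
  have hdisj : Disjoint R (I.image e) := by
    rw [Finset.disjoint_right]
    intro x hx hxR
    obtain ⟨m, hm, rfl⟩ := Finset.mem_image.1 hx
    have hmem := Pi.le_def.1 (Finset.mem_Iic.1 (hR ▸ hxR))
    have h5 := hmem z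
    rw [hez] at h5
    have h6 := (Finset.mem_Icc.1 (hI ▸ hm)).1
    omega
  have hcardI : (I.image e).card = s - 2 ^ d' := by
    rw [Finset.card_image_of_injOn (fun m₁ _ m₂ _ hom => by
      have := congrFun hom z; rwa [hez, hez] at this)]
    rw [hI, Nat.card_Icc]
    omega
  have hcardΛ : Λ.card = s := by
    rw [hΛ, Finset.card_union_of_disjoint hdisj, hcardR, hcardI]
    omega
  -- lowerness
  have hlow : ∀ ν' ∈ Λ, ∀ μ : Fin d → ℕ, (∀ k, μ k ≤ ν' k) → μ ∈ Λ := by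
    intro ν' hν' μ hμ
    rcases Finset.mem_union.1 hν' with hmem | hmem
    · apply Finset.mem_union_left
      rw [hR]
      refine Finset.mem_Iic.2 (Pi.le_def.2 (fun k => ?_))
      exact le_trans (hμ k) (Pi.le_def.1 (Finset.mem_Iic.1 (hR ▸ hmem)) k)
    · obtain ⟨m, hm, rfl⟩ := Finset.mem_image.1 hmem
      have hμ0 : ∀ k, k ≠ z → μ k = 0 := by
        intro k hk
        have := hμ k
        rw [he] at this
        simpa [hk] using this
      by_cases hz' : μ z ≤ ν z
      · apply Finset.mem_union_left
        rw [hR]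
        refine Finset.mem_Iic.2 (Pi.le_def.2 (fun k => ?_))
        by_cases hk : k = z
        · rw [hk]; exact hz'
        · rw [hμ0 k hk]; exact Nat.zero_le _
      · apply Finset.mem_union_right
        refine Finset.mem_image.2 ⟨μ z, ?_, ?_⟩
        · refine Finset.mem_Icc.2 ⟨by omega, ?_⟩
          have := hμ z
          rw [hez] at this
          exact le_trans this (Finset.mem_Icc.1 (hI ▸ hm)).2
        · funext k
          rw [he]
          by_cases hk : k = z
          · rw [hk]; simp
          · simp [hk, hμ0 k hk]
  -- the set in KT
  have ht₀ : sig Λ ∈ {t : ℕ | ∃ Λ' : Finset (Fin d → ℕ),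
      (∀ ν ∈ Λ', ∀ μ : Fin d → ℕ, (∀ k, μ k ≤ ν k) → μ ∈ Λ') ∧ Λ'.card = s ∧
      t = ∑ ν ∈ Λ', 2 ^ (Finset.univ.filter (fun k => ν k ≠ 0)).card} :=
    ⟨Λ, hlow, hcardΛ, rfl⟩
  have hbdd : BddAbove {t : ℕ | ∃ Λ' : Finset (Fin d → ℕ),
      (∀ ν ∈ Λ', ∀ μ : Fin d → ℕ, (∀ k, μ k ≤ ν k) → μ ∈ Λ') ∧ Λ'.card = s ∧
      t = ∑ ν ∈ Λ', 2 ^ (Finset.univ.filter (fun k => ν k ≠ 0)).card} := by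
    refine ⟨⌊(s:ℝ) ^ al⌋₊, fun t ht => ?_⟩
    obtain ⟨Λ', hl, hc, rfl⟩ := ht
    apply Nat.le_floor
    have := main_upper d Λ' hl
    rwa [hc, sig] at this
  constructor
  · -- lower bound
    have hle : sig Λ ≤ KT d s := le_csSup hbdd ht₀
    have h3 : (3:ℝ) ^ d' ≤ (KT d s : ℝ) := by
      have : (3:ℕ) ^ d' ≤ KT d s := by
        calc (3:ℕ) ^ d' = sig R := hsigR.symm
          _ ≤ sig Λ := Finset.sum_le_sum_of_subset (by rw [hΛ]; exact Finset.subset_union_left)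
          _ ≤ KT d s := hle
      exact_mod_cast this
    have hB : (s:ℝ) ^ al ≤ 3 ^ (d' + 1) := by
      have hcast : (s:ℝ) ≤ 2 ^ (d' + 1) := by exact_mod_cast hsle
      calc (s:ℝ) ^ al ≤ ((2:ℝ) ^ (d' + 1)) ^ al :=
            Real.rpow_le_rpow (Nat.cast_nonneg s) hcast al_pos.le
        _ = ((2:ℝ) ^ al) ^ (d' + 1) := by
            rw [← Real.rpow_natCast (2:ℝ) (d' + 1), ← Real.rpow_mul (by norm_num),
              mul_comm, Real.rpow_mul (by norm_num), Real.rpow_natCast]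
        _ = 3 ^ (d' + 1) := by rw [two_rpow_al]
    have : (3:ℝ) ^ (d' + 1) / 3 = 3 ^ d' := by
      rw [pow_succ]; field_simp
    calc (s:ℝ) ^ al / 3 ≤ (3:ℝ) ^ (d' + 1) / 3 := by linarith
      _ = 3 ^ d' := this
      _ ≤ (KT d s : ℝ) := h3
  · -- upper bound
    have hmem : KT d s ∈ {t : ℕ | ∃ Λ' : Finset (Fin d → ℕ),
        (∀ ν ∈ Λ', ∀ μ : Fin d → ℕ, (∀ k, μ k ≤ ν k) → μ ∈ Λ') ∧ Λ'.card = s ∧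
        t = ∑ ν ∈ Λ', 2 ^ (Finset.univ.filter (fun k => ν k ≠ 0)).card} :=
      Nat.sSup_mem ⟨sig Λ, ht₀⟩ hbdd
    obtain ⟨Λ', hl, hc, hKT⟩ := hmem
    rw [hKT]
    have := main_upper d Λ' hl
    rwa [hc, sig] at this
end

section
/- For s ≥ 2 with s ≤ 2^{d+1}, K_L(s) satisfies s²/4 ≤ K_L(s) ≤ s², where K_L(s) is the supremum of Σ_{ν∈Λ} ∏_k(2ν_k+1) over lower sets Λ ⊂ ℕ₀^d with #Λ = s. -/
/-- `K_L(s)`: the supremum of `∑_{ν ∈ Λ} ∏_k (2 ν_k + 1)` over lower sets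
`Λ ⊂ ℕ₀^d` of cardinality `s`. -/
noncomputable def KL (d s : ℕ) : ℕ :=
  sSup {t : ℕ | ∃ Λ : Finset (Fin d → ℕ),
    (∀ ν ∈ Λ, ∀ μ : Fin d → ℕ, (∀ k, μ k ≤ ν k) → μ ∈ Λ) ∧ Λ.card = s ∧
    t = ∑ ν ∈ Λ, ∏ k, (2 * ν k + 1)}

lemma sum_odd (n : ℕ) : ∑ j ∈ Finset.range n, (2 * j + 1) = n ^ 2 := by
  induction n with
  | zero => simp
  | succ n ih => rw [Finset.sum_range_succ, ih]; ring

/-- Pair-counting upper bound for lower sets. -/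
lemma lower_sum_le (d : ℕ) (Λ : Finset (Fin d → ℕ))
    (hlow : ∀ ν ∈ Λ, ∀ μ : Fin d → ℕ, (∀ k, μ k ≤ ν k) → μ ∈ Λ) :
    ∑ ν ∈ Λ, ∏ k, (2 * ν k + 1) ≤ Λ.card ^ 2 := by
  classical
  set S : (Fin d → ℕ) → Finset ((Fin d → ℕ) × (Fin d → ℕ)) :=
    fun ν => (Λ ×ˢ Λ).filter (fun p => ∀ k, max (p.1 k) (p.2 k) = ν k) with hS
  have hcard : ∀ ν ∈ Λ, (S ν).card = ∏ k, (2 * ν k + 1) := by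
    intro ν hν
    rw [show ∏ k, (2 * ν k + 1) =
        (Fintype.piFinset (fun k => Finset.range (2 * ν k + 1))).card by
      simp [Fintype.card_piFinset]]
    apply Finset.card_nbij'
      (i := fun (p : (Fin d → ℕ) × (Fin d → ℕ)) (k : Fin d) =>
        if p.2 k = ν k then p.1 k else ν k + 1 + p.2 k)
      (j := fun (g : Fin d → ℕ) =>
        ((fun k => if g k ≤ ν k then g k else ν k),
         (fun k => if g k ≤ ν k then ν k else g k - ν k - 1)))
    · intro p hp
      simp only [hS, Finset.mem_coe, Finset.mem_filter, Finset.mem_product] at hp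
      obtain ⟨⟨-, -⟩, hmax⟩ := hp
      rw [Finset.mem_coe, Fintype.mem_piFinset]
      intro k
      rw [Finset.mem_range]; beta_reduce
      have hm := hmax k
      by_cases h2 : p.2 k = ν k
      · rw [if_pos h2]
        have : p.1 k ≤ ν k := le_of_max_le_left hm.le
        omega
      · rw [if_neg h2]
        have : p.2 k ≤ ν k := le_of_max_le_right hm.le
        omega
    · intro g hg
      rw [Finset.mem_coe, Fintype.mem_piFinset] at hg
      simp only [hS, Finset.mem_coe, Finset.mem_filter, Finset.mem_product]
      have hgk : ∀ k, g k < 2 * ν k + 1 := fun k => Finset.mem_range.mp (hg k)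
      refine ⟨⟨hlow ν hν _ ?_, hlow ν hν _ ?_⟩, ?_⟩
      · intro k
        by_cases h : g k ≤ ν k
        · rw [if_pos h]; exact h
        · rw [if_neg h]
      · intro k
        have := hgk k
        by_cases h : g k ≤ ν k
        · rw [if_pos h]
        · rw [if_neg h]; omega
      · intro k
        have := hgk k
        by_cases h : g k ≤ ν k
        · rw [if_pos h, if_pos h]; omega
        · rw [if_neg h, if_neg h]; omega
    · intro p hp
      simp only [hS, Finset.mem_coe, Finset.mem_filter, Finset.mem_product] at hp
      obtain ⟨⟨-, -⟩, hmax⟩ := hp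
      have key : ∀ k, (if (if p.2 k = ν k then p.1 k else ν k + 1 + p.2 k) ≤ ν k
          then (if p.2 k = ν k then p.1 k else ν k + 1 + p.2 k) else ν k) = p.1 k ∧
          (if (if p.2 k = ν k then p.1 k else ν k + 1 + p.2 k) ≤ ν k
          then ν k else (if p.2 k = ν k then p.1 k else ν k + 1 + p.2 k) - ν k - 1)
          = p.2 k := by
        intro k
        have hm := hmax k
        have h1 : p.1 k ≤ ν k := le_of_max_le_left hm.le
        have h2 : p.2 k ≤ ν k := le_of_max_le_right hm.le
        by_cases hb : p.2 k = ν k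
        · rw [if_pos hb, if_pos h1, if_pos h1]
          exact ⟨rfl, hb.symm⟩
        · have ha : p.1 k = ν k := by omega
          rw [if_neg hb]
          have hno : ¬ (ν k + 1 + p.2 k ≤ ν k) := by omega
          rw [if_neg hno, if_neg hno]
          exact ⟨ha.symm, by omega⟩
      exact Prod.ext (funext fun k => (key k).1) (funext fun k => (key k).2)
    · intro g hg
      rw [Finset.mem_coe, Fintype.mem_piFinset] at hg
      have hgk : ∀ k, g k < 2 * ν k + 1 := fun k => Finset.mem_range.mp (hg k)
      funext k
      simp only
      by_cases h : g k ≤ ν k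
      · rw [if_pos h, if_pos h, if_pos rfl]
      · rw [if_neg h, if_neg h]
        have hne : g k - ν k - 1 ≠ ν k := by have := hgk k; omega
        rw [if_neg hne]
        have := hgk k
        omega
  have hdisj : ∀ ν ∈ Λ, ∀ ν' ∈ Λ, ν ≠ ν' → Disjoint (S ν) (S ν') := by
    intro ν _ ν' _ hne
    rw [Finset.disjoint_left]
    intro p hp hp'
    simp only [hS, Finset.mem_filter] at hp hp'
    exact hne (funext fun k => (hp.2 k).symm.trans (hp'.2 k))
  calc ∑ ν ∈ Λ, ∏ k, (2 * ν k + 1) = ∑ ν ∈ Λ, (S ν).card :=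
        Finset.sum_congr rfl (fun ν hν => (hcard ν hν).symm)
    _ = (Λ.biUnion S).card := (Finset.card_biUnion hdisj).symm
    _ ≤ (Λ ×ˢ Λ).card := Finset.card_le_card (Finset.biUnion_subset.mpr
        (fun ν _ => Finset.filter_subset _ _))
    _ = Λ.card ^ 2 := by rw [Finset.card_product]; ring

theorem KL_sharp_bounds (d s : ℕ) (hd : 1 ≤ d) (hs2 : 2 ≤ s) (hs : s ≤ 2 ^ (d + 1)) :
    (s : ℝ) ^ 2 / 4 ≤ (KL d s : ℝ) ∧ KL d s ≤ s ^ 2 := by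
  classical
  set T : Set ℕ := {t : ℕ | ∃ Λ : Finset (Fin d → ℕ),
    (∀ ν ∈ Λ, ∀ μ : Fin d → ℕ, (∀ k, μ k ≤ ν k) → μ ∈ Λ) ∧ Λ.card = s ∧
    t = ∑ ν ∈ Λ, ∏ k, (2 * ν k + 1)} with hT
  have hKL : KL d s = sSup T := rfl
  -- the "line" lower set
  let k0 : Fin d := ⟨0, hd⟩
  let e : ℕ → (Fin d → ℕ) := fun j k => if k = k0 then j else 0
  have einj : Function.Injective e := by
    intro a b hab
    have := congrFun hab k0
    simpa [e] using this
  let Λ₀ : Finset (Fin d → ℕ) := (Finset.range s).image e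
  have hmem : (s ^ 2 : ℕ) ∈ T := by
    refine ⟨Λ₀, ?_, ?_, ?_⟩
    · intro ν hν μ hμ
      simp only [Λ₀, Finset.mem_image, Finset.mem_range] at hν ⊢
      obtain ⟨j, hj, rfl⟩ := hν
      refine ⟨μ k0, ?_, ?_⟩
      · have := hμ k0; simp only [e, if_pos rfl] at this; omega
      · funext k
        by_cases h : k = k0
        · simp [e, h]
        · have := hμ k; simp only [e, if_neg h] at this ⊢; omega
    · rw [Finset.card_image_of_injective _ einj, Finset.card_range]
    · rw [Finset.sum_image (fun a _ b _ h => einj h)]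
      rw [← sum_odd s]
      apply Finset.sum_congr rfl
      intro j _
      rw [Finset.prod_eq_single k0]
      · simp [e]
      · intro k _ hk; simp [e, hk]
      · intro h; exact absurd (Finset.mem_univ k0) h
  have hub : ∀ t ∈ T, t ≤ s ^ 2 := by
    rintro t ⟨Λ, hlow, hcard, rfl⟩
    simpa [hcard] using lower_sum_le d Λ hlow
  have hbdd : BddAbove T := ⟨s ^ 2, hub⟩
  have h1 : s ^ 2 ≤ KL d s := hKL ▸ le_csSup hbdd hmem
  have h2 : KL d s ≤ s ^ 2 := hKL ▸ csSup_le ⟨_, hmem⟩ hub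
  refine ⟨?_, h2⟩
  have : (s : ℝ) ^ 2 ≤ (KL d s : ℝ) := by exact_mod_cast h1
  nlinarith [sq_nonneg (s : ℝ)]
end
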